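/- arXiv:0806.3298 — 3 statements merged into one kernel-verified Lean document; each statement's English description precedes it below -/
import Mathlib

section
/- Let X be a scheme such that for every affine open subset U ⊆ X the ring of sections Γ(U, O_X) is seminormal. Then for every open subset U ⊆ X, the ring Γ(U, O_X) is seminormal. -/
open AlgebraicGeometry Opposite

section Aux

open CategoryTheory TopologicalSpace

universe u

variable (X : Scheme.{u})

/-- Index type: affine opens contained in `U`. -/
abbrev AffIdx (U : X.Opens) : Type u := {V : X.Opens // IsAffineOpen V ∧ V ≤ U}

lemma aff_cover (U : X.Opens) : U ≤ ⨆ i : AffIdx X U, i.1 := by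
  intro x hx
  obtain ⟨_, ⟨V, hV, rfl⟩, hxV, hVU⟩ :=
    X.isBasis_affineOpens.exists_subset_of_mem_open hx U.2
  exact Opens.mem_iSup.mpr ⟨⟨V, hV, hVU⟩, hxV⟩

variable (h : ∀ U : X.Opens, IsAffineOpen U →
      ∀ b c : X.presheaf.obj (op U), b ^ 3 = c ^ 2 →
        ∃! a : X.presheaf.obj (op U), a ^ 2 = b ∧ a ^ 3 = c)

include h in
/-- Two sections with the same square and cube agree (using local uniqueness on affines). -/
lemma unique_aux (U : X.Opens) (a a' : X.presheaf.obj (op U))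
    (h2 : a ^ 2 = a' ^ 2) (h3 : a ^ 3 = a' ^ 3) : a = a' := by
  apply X.sheaf.eq_of_locally_eq' (fun i : AffIdx X U => i.1) U
    (fun i => homOfLE i.2.2) (aff_cover X U)
  intro i
  show X.presheaf.map (homOfLE i.2.2).op a = X.presheaf.map (homOfLE i.2.2).op a'
  set f := (X.presheaf.map (homOfLE i.2.2).op).hom
  have key := h i.1 i.2.1 (f (a ^ 2)) (f (a ^ 3))
    (by rw [← map_pow, ← map_pow, ← pow_mul, ← pow_mul])
  exact key.unique ⟨(map_pow f a 2).symm, (map_pow f a 3).symm⟩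
    ⟨by rw [← map_pow, ← h2], by rw [← map_pow, ← h3]⟩

end Aux

/-- A commutative ring `A` is *seminormal* if it is reduced and for every pair of elements
`b, c ∈ A` with `b ^ 3 = c ^ 2` there is a unique `a ∈ A` with `a ^ 2 = b` and `a ^ 3 = c`
(Swan's intrinsic characterization). -/
def IsSeminormalRing (A : Type*) [CommRing A] : Prop :=
  IsReduced A ∧ ∀ b c : A, b ^ 3 = c ^ 2 → ∃! a : A, a ^ 2 = b ∧ a ^ 3 = c

/-- If every affine open of a scheme `X` has seminormal ring of sections, then the ring of
sections over *any* open subset of `X` is seminormal. -/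
theorem globalSectionsOfSeminormality (X : Scheme)
    (h : ∀ U : X.Opens, IsAffineOpen U → IsSeminormalRing (X.presheaf.obj (op U))) :
    ∀ U : X.Opens, IsSeminormalRing (X.presheaf.obj (op U)) := by
  intro U
  have h' : ∀ V : X.Opens, IsAffineOpen V →
      ∀ b c : X.presheaf.obj (op V), b ^ 3 = c ^ 2 →
        ∃! a : X.presheaf.obj (op V), a ^ 2 = b ∧ a ^ 3 = c := fun V hV => (h V hV).2
  constructor
  · -- Reducedness glues.
    constructor
    intro x hx
    apply X.sheaf.eq_of_locally_eq' (fun i : AffIdx X U => i.1) U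
      (fun i => CategoryTheory.homOfLE i.2.2) (aff_cover X U)
    intro i
    have : IsReduced (X.presheaf.obj (op i.1)) := (h i.1 i.2.1).1
    show X.presheaf.map (CategoryTheory.homOfLE i.2.2).op x =
      X.presheaf.map (CategoryTheory.homOfLE i.2.2).op 0
    rw [map_zero]
    exact (hx.map (X.presheaf.map (CategoryTheory.homOfLE i.2.2).op).hom).eq_zero
  · intro b c hbc
    -- Local solutions on each affine open inside U.
    have hloc : ∀ i : AffIdx X U, ∃! a : X.presheaf.obj (op i.1),
        a ^ 2 = X.presheaf.map (CategoryTheory.homOfLE i.2.2).op b ∧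
        a ^ 3 = X.presheaf.map (CategoryTheory.homOfLE i.2.2).op c :=
      fun i => h' i.1 i.2.1 _ _ (by rw [← map_pow, ← map_pow, hbc])
    choose sf hsf2 hsf3 using fun i => (hloc i).exists
    -- The local solutions are compatible.
    have compat : TopCat.Presheaf.IsCompatible X.sheaf.1 (fun i : AffIdx X U => i.1) sf := by
      intro i j
      show X.presheaf.map (TopologicalSpace.Opens.infLELeft i.1 j.1).op (sf i) =
        X.presheaf.map (TopologicalSpace.Opens.infLERight i.1 j.1).op (sf j)
      apply unique_aux X h' (i.1 ⊓ j.1)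
      · rw [← map_pow, ← map_pow, hsf2 i, hsf2 j,
          ← CategoryTheory.comp_apply, ← CategoryTheory.comp_apply,
          ← X.presheaf.map_comp, ← X.presheaf.map_comp]
        rfl
      · rw [← map_pow, ← map_pow, hsf3 i, hsf3 j,
          ← CategoryTheory.comp_apply, ← CategoryTheory.comp_apply,
          ← X.presheaf.map_comp, ← X.presheaf.map_comp]
        rfl
    obtain ⟨s, hs, -⟩ := X.sheaf.existsUnique_gluing' (fun i : AffIdx X U => i.1) U
      (fun i => CategoryTheory.homOfLE i.2.2) (aff_cover X U) sf compat
    refine ⟨s, ⟨?_, ?_⟩, ?_⟩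
    · apply X.sheaf.eq_of_locally_eq' (fun i : AffIdx X U => i.1) U
        (fun i => CategoryTheory.homOfLE i.2.2) (aff_cover X U)
      intro i
      show X.presheaf.map (CategoryTheory.homOfLE i.2.2).op (s ^ 2) =
        X.presheaf.map (CategoryTheory.homOfLE i.2.2).op b
      erw [map_pow, show X.presheaf.map (CategoryTheory.homOfLE i.2.2).op s = sf i from hs i,
        hsf2 i]
    · apply X.sheaf.eq_of_locally_eq' (fun i : AffIdx X U => i.1) U
        (fun i => CategoryTheory.homOfLE i.2.2) (aff_cover X U)
      intro i
      show X.presheaf.map (CategoryTheory.homOfLE i.2.2).op (s ^ 3) =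
        X.presheaf.map (CategoryTheory.homOfLE i.2.2).op c
      erw [map_pow, show X.presheaf.map (CategoryTheory.homOfLE i.2.2).op s = sf i from hs i,
        hsf3 i]
    · rintro a ⟨ha2, ha3⟩
      apply unique_aux X h' U
      · rw [ha2]
        apply X.sheaf.eq_of_locally_eq' (fun i : AffIdx X U => i.1) U
          (fun i => CategoryTheory.homOfLE i.2.2) (aff_cover X U)
        intro i
        show X.presheaf.map (CategoryTheory.homOfLE i.2.2).op b =
          X.presheaf.map (CategoryTheory.homOfLE i.2.2).op (s ^ 2)
        erw [map_pow, show X.presheaf.map (CategoryTheory.homOfLE i.2.2).op s = sf i from hs i,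
          hsf2 i]
      · rw [ha3]
        apply X.sheaf.eq_of_locally_eq' (fun i : AffIdx X U => i.1) U
          (fun i => CategoryTheory.homOfLE i.2.2) (aff_cover X U)
        intro i
        show X.presheaf.map (CategoryTheory.homOfLE i.2.2).op c =
          X.presheaf.map (CategoryTheory.homOfLE i.2.2).op (s ^ 3)
        erw [map_pow, show X.presheaf.map (CategoryTheory.homOfLE i.2.2).op s = sf i from hs i,
          hsf3 i]
end

section
/- Let A ⊆ B be a finite integral extension of reduced Noetherian rings and fix a pair of relatively prime integers e > f > 1. Then the following are equivalent: (i) A is seminormal in B, i.e., every intermediate ring A ⊆ C ⊆ B for which the map Spec C → Spec A is bijective and, for each prime Q of C lying over P = Q ∩ A, the induced extension of residue fields κ(P) → κ(Q) is an isomorphism, satisfies C = A; (ii) every element b ∈ B with b^e ∈ A and b^f ∈ A lies in A. -/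
open IsLocalRing

/-- For an extension `A ≤ C` of subrings of `B` and a prime `Q` of `C` with `P = Q ∩ A`,
the induced map of residue fields `κ(P) →+* κ(Q)`. -/
noncomputable def residueFieldMapOfLE {B : Type*} [CommRing B] {A C : Subring B} (h : A ≤ C)
    (Q : PrimeSpectrum C) :
    ResidueField (Localization.AtPrime (Q.asIdeal.comap (Subring.inclusion h))) →+*
      ResidueField (Localization.AtPrime Q.asIdeal) :=
  letI := Localization.isLocalHom_localRingHom (Q.asIdeal.comap (Subring.inclusion h))
    Q.asIdeal (Subring.inclusion h) rfl
  ResidueField.map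
    (Localization.localRingHom (Q.asIdeal.comap (Subring.inclusion h)) Q.asIdeal
      (Subring.inclusion h) rfl)

/-- An extension `A ≤ C` of subrings of `B` is *subintegral* if `Spec C → Spec A` is bijective
and all the induced maps of residue fields are isomorphisms. -/
def Subring.IsSubintegralIn {B : Type*} [CommRing B] (A C : Subring B) (h : A ≤ C) : Prop :=
  Function.Bijective (PrimeSpectrum.comap (Subring.inclusion h)) ∧
    ∀ Q : PrimeSpectrum C, Function.Bijective (residueFieldMapOfLE h Q)

/-- A subring `A` of `B` is *seminormal in `B`* if the only subintegral intermediate extension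
`A ⊆ C ⊆ B` is `C = A`. -/
def Subring.IsSeminormalIn {B : Type*} [CommRing B] (A : Subring B) : Prop :=
  ∀ C : Subring B, (h : A ≤ C) → A.IsSubintegralIn C h → C = A

section ResidueAux
variable {B : Type*} [CommRing B] {A C : Subring B} (h : A ≤ C) (Q : PrimeSpectrum C)

/-- the composite `C → κ(Q)`. -/
noncomputable def resC : C →+* ResidueField (Localization.AtPrime Q.asIdeal) :=
  (residue _).comp (algebraMap C (Localization.AtPrime Q.asIdeal))

lemma resC_eq_zero_iff (c : C) : resC Q c = 0 ↔ c ∈ Q.asIdeal := by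
  unfold resC
  rw [RingHom.comp_apply, residue_eq_zero_iff,
    IsLocalization.AtPrime.to_map_mem_maximal_iff _ Q.asIdeal]

lemma residueFieldMapOfLE_residue (a : A) :
    residueFieldMapOfLE h Q
      (residue _ (algebraMap A (Localization.AtPrime (Q.asIdeal.comap (Subring.inclusion h))) a)) =
      resC Q (Subring.inclusion h a) := by
  unfold residueFieldMapOfLE resC
  letI := Localization.isLocalHom_localRingHom (Q.asIdeal.comap (Subring.inclusion h))
    Q.asIdeal (Subring.inclusion h) rfl
  rw [IsLocalRing.ResidueField.map_residue, Localization.localRingHom_to_map]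
  rfl

lemma resC_ne_zero (s : A) (hs : s ∉ Q.asIdeal.comap (Subring.inclusion h)) :
    resC Q (Subring.inclusion h s) ≠ 0 := by
  rw [Ne, resC_eq_zero_iff]
  exact fun hc => hs (Ideal.mem_comap.mpr hc)

lemma surjective_of_key
    (hk : ∀ c : C, ∃ s a : A, s ∉ Q.asIdeal.comap (Subring.inclusion h) ∧
      Subring.inclusion h s * c - Subring.inclusion h a ∈ Q.asIdeal) :
    Function.Surjective (residueFieldMapOfLE h Q) := by
  set ψ := residueFieldMapOfLE h Q
  set K := ψ.fieldRange
  have hcmem : ∀ c : C, resC Q c ∈ K := by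
    intro c
    obtain ⟨s, a, hs, hmem⟩ := hk c
    have h0 : resC Q (Subring.inclusion h s) * resC Q c = resC Q (Subring.inclusion h a) := by
      have := (resC_eq_zero_iff Q _).mpr hmem
      rw [map_sub, map_mul, sub_eq_zero] at this
      exact this
    have hsne := resC_ne_zero h Q s hs
    have hc : resC Q c = resC Q (Subring.inclusion h a) / resC Q (Subring.inclusion h s) := by
      field_simp [eq_div_iff hsne]
      linear_combination h0
    rw [hc, ← residueFieldMapOfLE_residue h Q a, ← residueFieldMapOfLE_residue h Q s]
    exact div_mem (RingHom.mem_fieldRange_self _ _) (RingHom.mem_fieldRange_self _ _)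
  intro z
  obtain ⟨w, rfl⟩ := residue_surjective z
  obtain ⟨⟨c, t⟩, rfl⟩ := IsLocalization.mk'_surjective Q.asIdeal.primeCompl w
  have hspec : residue _ (IsLocalization.mk' (Localization.AtPrime Q.asIdeal) c t) * resC Q t.1
      = resC Q c := by
    unfold resC
    rw [RingHom.comp_apply, RingHom.comp_apply, ← map_mul, IsLocalization.mk'_spec]
  have htne : resC Q t.1 ≠ 0 := by
    rw [Ne, resC_eq_zero_iff]; exact t.2
  have : residue _ (IsLocalization.mk' (Localization.AtPrime Q.asIdeal) c t)
      = resC Q c / resC Q t.1 := by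
    rw [eq_div_iff htne]; exact hspec
  rw [this]
  have := div_mem (hcmem c) (hcmem t.1)
  obtain ⟨y, hy⟩ := this
  exact ⟨y, hy⟩

lemma key_of_surjective (hs : Function.Surjective (residueFieldMapOfLE h Q)) (c : C) :
    ∃ s a : A, s ∉ Q.asIdeal.comap (Subring.inclusion h) ∧
      Subring.inclusion h s * c - Subring.inclusion h a ∈ Q.asIdeal := by
  obtain ⟨z, hz⟩ := hs (resC Q c)
  obtain ⟨w, rfl⟩ := residue_surjective z
  obtain ⟨⟨a, s⟩, rfl⟩ := IsLocalization.mk'_surjective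
    (Q.asIdeal.comap (Subring.inclusion h)).primeCompl w
  refine ⟨s.1, a, s.2, ?_⟩
  rw [← resC_eq_zero_iff Q]
  letI := Localization.isLocalHom_localRingHom (Q.asIdeal.comap (Subring.inclusion h))
    Q.asIdeal (Subring.inclusion h) rfl
  have hmk : residueFieldMapOfLE h Q (residue _ (IsLocalization.mk' _ a s)) =
      residue _ (IsLocalization.mk' (Localization.AtPrime Q.asIdeal)
        (Subring.inclusion h a) (⟨Subring.inclusion h s, fun hq => s.2 (Ideal.mem_comap.mpr hq)⟩ :
            Q.asIdeal.primeCompl)) := by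
    unfold residueFieldMapOfLE
    rw [IsLocalRing.ResidueField.map_residue, Localization.localRingHom_mk']
  rw [hmk] at hz
  have hspec : residue _ (IsLocalization.mk' (Localization.AtPrime Q.asIdeal)
        (Subring.inclusion h a) (⟨Subring.inclusion h s, fun hq => s.2 (Ideal.mem_comap.mpr hq)⟩ :
            Q.asIdeal.primeCompl)) * resC Q (Subring.inclusion h s.1)
      = resC Q (Subring.inclusion h a) := by
    unfold resC
    rw [RingHom.comp_apply, RingHom.comp_apply, ← map_mul, IsLocalization.mk'_spec]
  rw [map_sub, map_mul, ← hz]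
  linear_combination hspec

lemma injective_resmap : Function.Injective (residueFieldMapOfLE h Q) :=
  RingHom.injective _

end ResidueAux

section Forward
variable {B : Type*} [CommRing B]

lemma one_not_mem_prime {R : Type*} [CommRing R] (P : Ideal R) [hP : P.IsPrime] : (1:R) ∉ P :=
  fun h1 => hP.ne_top (Ideal.eq_top_iff_one P |>.mpr h1)

theorem forward_dir (A : Subring B) [Algebra.IsIntegral A B]
    (e f : ℕ) (hf : 1 < f) (hef : f < e) (hcop : Nat.Coprime e f)
    (hsn : A.IsSeminormalIn) (b : B) (hbe : b ^ e ∈ A) (hbf : b ^ f ∈ A) : b ∈ A := by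
  set C : Subring B := Subring.closure (↑A ∪ {b}) with hCdef
  have h : A ≤ C := fun a ha => Subring.subset_closure (Or.inl ha)
  have hbC : b ∈ C := Subring.subset_closure (Or.inr rfl)
  -- arithmetic: x * e = y * f + 1
  obtain ⟨x, -, hx⟩ := Nat.exists_mul_mod_eq_one_of_coprime hcop hf
  set y := e * x / f with hy
  have h1 : f * y + 1 = e * x := by
    rw [hy, ← hx]; exact Nat.div_add_mod (e * x) f
  -- key identity
  have hkey : (b ^ f) ^ y * b = (b ^ e) ^ x := by
    rw [← pow_mul, ← pow_mul, ← h1, pow_succ]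
  -- propα
  have propα : ∀ c ∈ C, ∃ m : ℕ, (b ^ f) ^ m * c ∈ A := by
    intro c hc
    induction hc using Subring.closure_induction with
    | mem z hz =>
      rcases hz with hz | hz
      · exact ⟨0, by simpa using hz⟩
      · rw [Set.mem_singleton_iff] at hz
        subst hz
        exact ⟨y, by rw [hkey]; exact pow_mem hbe x⟩
    | zero => exact ⟨0, by simpa using A.zero_mem⟩
    | one => exact ⟨0, by simpa using A.one_mem⟩
    | add z w hz hw ihz ihw =>
      obtain ⟨m₁, h₁⟩ := ihz
      obtain ⟨m₂, h₂⟩ := ihw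
      refine ⟨m₁ + m₂, ?_⟩
      have : (b ^ f) ^ (m₁ + m₂) * (z + w)
          = (b ^ f) ^ m₂ * ((b ^ f) ^ m₁ * z) + (b ^ f) ^ m₁ * ((b ^ f) ^ m₂ * w) := by ring
      rw [this]
      exact A.add_mem (A.mul_mem (pow_mem hbf m₂) h₁) (A.mul_mem (pow_mem hbf m₁) h₂)
    | neg z hz ihz =>
      obtain ⟨m, hm⟩ := ihz
      exact ⟨m, by rw [mul_neg]; exact A.neg_mem hm⟩
    | mul z w hz hw ihz ihw =>
      obtain ⟨m₁, h₁⟩ := ihz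
      obtain ⟨m₂, h₂⟩ := ihw
      refine ⟨m₁ + m₂, ?_⟩
      have : (b ^ f) ^ (m₁ + m₂) * (z * w) = ((b ^ f) ^ m₁ * z) * ((b ^ f) ^ m₂ * w) := by ring
      rw [this]
      exact A.mul_mem h₁ h₂
  -- propβ
  have propβ : ∀ c ∈ C, ∃ a ∈ A, ∃ c' ∈ C, c = a + b * c' := by
    intro c hc
    induction hc using Subring.closure_induction with
    | mem z hz =>
      rcases hz with hz | hz
      · exact ⟨z, hz, 0, C.zero_mem, by ring⟩
      · rw [Set.mem_singleton_iff] at hz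
        subst hz
        exact ⟨0, A.zero_mem, 1, C.one_mem, by ring⟩
    | zero => exact ⟨0, A.zero_mem, 0, C.zero_mem, by ring⟩
    | one => exact ⟨1, A.one_mem, 0, C.zero_mem, by ring⟩
    | add z w hz hw ihz ihw =>
      obtain ⟨a₁, ha₁, c₁, hc₁, he₁⟩ := ihz
      obtain ⟨a₂, ha₂, c₂, hc₂, he₂⟩ := ihw
      exact ⟨a₁ + a₂, A.add_mem ha₁ ha₂, c₁ + c₂, C.add_mem hc₁ hc₂, by rw [he₁, he₂]; ring⟩
    | neg z hz ihz =>
      obtain ⟨a, ha, c', hc', he⟩ := ihz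
      exact ⟨-a, A.neg_mem ha, -c', C.neg_mem hc', by rw [he]; ring⟩
    | mul z w hz hw ihz ihw =>
      obtain ⟨a₁, ha₁, c₁, hc₁, he₁⟩ := ihz
      obtain ⟨a₂, ha₂, c₂, hc₂, he₂⟩ := ihw
      refine ⟨a₁ * a₂, A.mul_mem ha₁ ha₂,
        a₁ * c₂ + c₁ * a₂ + b * (c₁ * c₂),
        C.add_mem (C.add_mem (C.mul_mem (h ha₁) hc₂) (C.mul_mem hc₁ (h ha₂)))
          (C.mul_mem hbC (C.mul_mem hc₁ hc₂)), by rw [he₁, he₂]; ring⟩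
  -- subtype elements
  set bC : C := (⟨b, hbC⟩ : C) with hbCdef
  set vA : A := (⟨b ^ f, hbf⟩ : A) with hvAdef
  have hvb : Subring.inclusion h vA = bC ^ f := rfl
  -- injectivity aux for Spec
  have hQle : ∀ Q₁ Q₂ : PrimeSpectrum C,
      Q₁.asIdeal.comap (Subring.inclusion h) = Q₂.asIdeal.comap (Subring.inclusion h) →
      Q₁.asIdeal ≤ Q₂.asIdeal := by
    intro Q₁ Q₂ hPeq c hc
    by_cases hv : vA ∈ Q₁.asIdeal.comap (Subring.inclusion h)
    · have hb₁ : bC ∈ Q₁.asIdeal := by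
        refine Q₁.isPrime.mem_of_pow_mem f ?_
        rw [← hvb]; exact Ideal.mem_comap.mp hv
      have hb₂ : bC ∈ Q₂.asIdeal := by
        refine Q₂.isPrime.mem_of_pow_mem f ?_
        rw [← hvb]; exact Ideal.mem_comap.mp (hPeq ▸ hv)
      obtain ⟨a, ha, c', hc', he⟩ := propβ (↑c) c.2
      have heC : c = Subring.inclusion h ⟨a, ha⟩ + bC * ⟨c', hc'⟩ := by
        apply Subtype.ext
        exact he
      have hmem₁ : Subring.inclusion h ⟨a, ha⟩ ∈ Q₁.asIdeal := by
        have heq2 : Subring.inclusion h ⟨a, ha⟩ = c - bC * ⟨c', hc'⟩ := by rw [heC]; ring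
        rw [heq2]
        exact Ideal.sub_mem _ hc (Q₁.asIdeal.mul_mem_right _ hb₁)
      have hmem₂ : Subring.inclusion h ⟨a, ha⟩ ∈ Q₂.asIdeal :=
        Ideal.mem_comap.mp (hPeq ▸ Ideal.mem_comap.mpr hmem₁)
      rw [heC]
      exact Ideal.add_mem _ hmem₂ (Q₂.asIdeal.mul_mem_right _ hb₂)
    · obtain ⟨m, hm⟩ := propα (↑c) c.2
      have haeq : Subring.inclusion h ⟨(b ^ f) ^ m * ↑c, hm⟩
          = (Subring.inclusion h vA) ^ m * c := rfl
      have hmem₁ : Subring.inclusion h ⟨(b ^ f) ^ m * ↑c, hm⟩ ∈ Q₁.asIdeal := by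
        rw [haeq]; exact Q₁.asIdeal.mul_mem_left _ hc
      have hmem₂ : (Subring.inclusion h vA) ^ m * c ∈ Q₂.asIdeal := by
        rw [← haeq]
        exact Ideal.mem_comap.mp (hPeq ▸ Ideal.mem_comap.mpr hmem₁)
      rcases Q₂.isPrime.mem_or_mem hmem₂ with hmem | hmem
      · exact absurd (Ideal.mem_comap.mpr (Q₂.isPrime.mem_of_pow_mem m hmem))
          (fun hvq => hv (hPeq ▸ hvq))
      · exact hmem
  -- surjectivity of Spec comap
  letI : Algebra A C := (Subring.inclusion h).toAlgebra
  haveI : Algebra.IsIntegral A C := by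
    constructor
    intro c
    obtain ⟨p, pm, pe⟩ := (Algebra.IsIntegral.isIntegral (R := A) (↑c : B))
    refine ⟨p, pm, ?_⟩
    have hcomp : (C.subtype).comp (algebraMap A C) = algebraMap A B := by
      ext a; rfl
    have := Polynomial.hom_eval₂ p (algebraMap A C) C.subtype c
    rw [hcomp] at this
    apply Subtype.ext
    rw [show ((Polynomial.eval₂ (algebraMap A C) c p : C) : B)
        = C.subtype (Polynomial.eval₂ (algebraMap A C) c p) from rfl, this]
    exact pe
  have hsurj : Function.Surjective (PrimeSpectrum.comap (Subring.inclusion h)) := by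
    intro P
    obtain ⟨Q, _, hQp, hQc⟩ := Ideal.exists_ideal_over_prime_of_isIntegral P.asIdeal
      (⊥ : Ideal C) (by
        intro a ha
        have : Subring.inclusion h a = 0 := Ideal.mem_comap.mp ha
        have ha0 : a = 0 := by
          apply Subtype.ext
          have := congrArg (Subtype.val) this
          exact this
        rw [ha0]; exact P.asIdeal.zero_mem)
    exact ⟨⟨Q, hQp⟩, PrimeSpectrum.ext hQc⟩
  -- key for residue fields
  have hkeyQ : ∀ Q : PrimeSpectrum C, ∀ c : C,
      ∃ s a : A, s ∉ Q.asIdeal.comap (Subring.inclusion h) ∧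
        Subring.inclusion h s * c - Subring.inclusion h a ∈ Q.asIdeal := by
    intro Q c
    by_cases hv : vA ∈ Q.asIdeal.comap (Subring.inclusion h)
    · have hbQ : bC ∈ Q.asIdeal := by
        refine Q.isPrime.mem_of_pow_mem f ?_
        rw [← hvb]; exact Ideal.mem_comap.mp hv
      obtain ⟨a, ha, c', hc', he⟩ := propβ (↑c) c.2
      refine ⟨1, ⟨a, ha⟩, one_not_mem_prime _, ?_⟩
      have heC : Subring.inclusion h 1 * c - Subring.inclusion h ⟨a, ha⟩ = bC * ⟨c', hc'⟩ := by
        rw [map_one, one_mul]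
        apply Subtype.ext
        show (c : B) - a = b * c'
        rw [he]; ring
      rw [heC]
      exact Q.asIdeal.mul_mem_right _ hbQ
    · obtain ⟨m, hm⟩ := propα (↑c) c.2
      refine ⟨vA ^ m, ⟨(b ^ f) ^ m * ↑c, hm⟩, ?_, ?_⟩
      · intro hp
        exact hv (Ideal.mem_comap.mpr
          (Q.isPrime.mem_of_pow_mem m (by
            have : Subring.inclusion h (vA ^ m) = (Subring.inclusion h vA) ^ m := map_pow _ _ _
            rw [← this]; exact Ideal.mem_comap.mp hp)))
      · have hz : Subring.inclusion h (vA ^ m) * c - Subring.inclusion h ⟨(b ^ f) ^ m * ↑c, hm⟩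
            = 0 := by
          apply Subtype.ext
          show (b ^ f) ^ m * (c : B) - (b ^ f) ^ m * (c : B) = 0
          ring
        rw [hz]; exact Q.asIdeal.zero_mem
  -- assemble
  have hsub : A.IsSubintegralIn C h := by
    refine ⟨⟨fun Q₁ Q₂ hQ => ?_, hsurj⟩, fun Q => ⟨injective_resmap h Q,
      surjective_of_key h Q (hkeyQ Q)⟩⟩
    have hQ' : Q₁.asIdeal.comap (Subring.inclusion h) = Q₂.asIdeal.comap (Subring.inclusion h) :=
      congrArg PrimeSpectrum.asIdeal hQ
    exact PrimeSpectrum.ext (le_antisymm (hQle Q₁ Q₂ hQ') (hQle Q₂ Q₁ hQ'.symm))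
  have hCA : C = A := hsn C h hsub
  rw [← hCA]
  exact hbC


end Forward

section Backward
variable {B : Type*} [CommRing B]

set_option maxHeartbeats 2000000 in
theorem backward_dir (A : Subring B) [IsNoetherianRing A] [Module.Finite A B]
    (e f : ℕ) (hf : 1 < f) (hef : f < e)
    (hpow : ∀ b : B, b ^ e ∈ A → b ^ f ∈ A → b ∈ A) : A.IsSeminormalIn := by
  classical
  -- the (2,3) criterion
  have H23 : ∀ b : B, b ^ 2 ∈ A → b ^ 3 ∈ A → b ∈ A := by
    intro b hb2 hb3
    have hall : ∀ n : ℕ, b ^ (n + 2) ∈ A := by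
      intro n
      induction n using Nat.strong_induction_on with
      | _ n ih =>
        match n with
        | 0 => simpa using hb2
        | 1 => simpa using hb3
        | (k + 2) =>
          have hsplit : b ^ (k + 2 + 2) = b ^ 2 * b ^ (k + 2) := by
            rw [← pow_add]; congr 1; omega
          rw [hsplit]
          exact A.mul_mem hb2 (ih k (by omega))
    refine hpow b ?_ ?_
    · have : e = (e - 2) + 2 := by omega
      rw [this]; exact hall _
    · have : f = (f - 2) + 2 := by omega
      rw [this]; exact hall _
  intro C h hsub
  obtain ⟨hspec, hres⟩ := hsub
  refine le_antisymm ?_ h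
  by_contra hCA
  -- module set-up
  letI : Algebra A C := (Subring.inclusion h).toAlgebra
  let CA : Submodule A B :=
    { carrier := C
      add_mem' := fun hx hy => C.add_mem hx hy
      zero_mem' := C.zero_mem
      smul_mem' := fun a x hx => by
        show (a : B) * x ∈ C
        exact C.mul_mem (h a.2) hx }
  -- the conductor ideal
  let 𝔠 : Ideal A :=
    { carrier := {a : A | ∀ x ∈ C, (a : B) * x ∈ A}
      add_mem' := fun {a₁ a₂} h₁ h₂ x hx => by
        have : ((a₁ + a₂ : A) : B) * x = (a₁ : B) * x + (a₂ : B) * x := by push_cast; ring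
        rw [this]; exact A.add_mem (h₁ x hx) (h₂ x hx)
      zero_mem' := fun x hx => by
        have : ((0 : A) : B) * x = 0 := by push_cast; ring
        rw [this]; exact A.zero_mem
      smul_mem' := fun r a ha x hx => by
        show ((r * a : A) : B) * x ∈ A
        have : ((r * a : A) : B) * x = (r : B) * ((a : B) * x) := by push_cast; ring
        rw [this]; exact A.mul_mem r.2 (ha x hx) }
  have hcmem : ∀ a : A, a ∈ 𝔠 ↔ ∀ x ∈ C, (a : B) * x ∈ A := fun a => Iff.rfl
  have hcne : 𝔠 ≠ ⊤ := by
    intro htop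
    apply hCA
    intro x hx
    have h1 : (1 : A) ∈ 𝔠 := htop ▸ Submodule.mem_top
    have := h1 x hx
    simpa using this
  -- a minimal prime over the conductor
  obtain ⟨M, hMmax, hMc⟩ := Ideal.exists_le_maximal 𝔠 hcne
  haveI := hMmax.isPrime
  obtain ⟨P, hPmin, _⟩ := Ideal.exists_minimalPrimes_le hMc
  have hPprime : P.IsPrime := hPmin.1.1
  have hcP : 𝔠 ≤ P := hPmin.1.2
  haveI := hPprime
  -- the unique prime over P
  obtain ⟨Qs, hQs⟩ := hspec.2 ⟨P, hPprime⟩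
  have hQP : Qs.asIdeal.comap (Subring.inclusion h) = P := congrArg PrimeSpectrum.asIdeal hQs
  -- F4 : an element not absorbed into A by any s ∉ P
  have hF4 : ∃ c : C, ∀ s : A, s ∉ P → ((s : B) * (c : B)) ∉ A := by
    by_contra hcon
    push_neg at hcon
    choose sfun hs1 hs2 using hcon
    obtain ⟨G, hG⟩ := (IsNoetherian.noetherian CA : CA.FG)
    have hgmem : ∀ g ∈ G, g ∈ C := by
      intro g hg
      have : g ∈ CA := hG ▸ Submodule.subset_span hg
      exact this
    set s : A := ∏ g ∈ G.attach, sfun ⟨g.1, hgmem g.1 g.2⟩ with hsdef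
    have hsP : s ∉ P := by
      have : s ∈ P.primeCompl := Submonoid.prod_mem P.primeCompl
        (fun g _ => hs1 ⟨g.1, hgmem g.1 g.2⟩)
      exact this
    have hsc : s ∈ 𝔠 := by
      intro x hx
      have hx' : x ∈ Submodule.span A (G : Set B) := by rw [hG]; exact hx
      clear hx
      induction hx' using Submodule.span_induction with
      | mem z hz =>
        have hzG : z ∈ G := hz
        have hsplit : s = sfun ⟨z, hgmem z hzG⟩ *
            ∏ g ∈ G.attach.erase ⟨z, hzG⟩, sfun ⟨g.1, hgmem g.1 g.2⟩ := by
          rw [hsdef, ← Finset.mul_prod_erase G.attach _ (Finset.mem_attach G ⟨z, hzG⟩)]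
        rw [hsplit]
        have : ((sfun ⟨z, hgmem z hzG⟩ *
            ∏ g ∈ G.attach.erase ⟨z, hzG⟩, sfun ⟨g.1, hgmem g.1 g.2⟩ : A) : B) * z
            = ((∏ g ∈ G.attach.erase ⟨z, hzG⟩, sfun ⟨g.1, hgmem g.1 g.2⟩ : A) : B) *
              (((sfun ⟨z, hgmem z hzG⟩ : A) : B) * z) := by push_cast; ring
        rw [this]
        exact A.mul_mem (SetLike.coe_mem _) (hs2 ⟨z, hgmem z hzG⟩)
      | zero => simpa using A.zero_mem
      | add u v hu hv ihu ihv =>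
        have : (s : B) * (u + v) = (s : B) * u + (s : B) * v := by ring
        rw [this]; exact A.add_mem ihu ihv
      | smul a u hu ihu =>
        have : (s : B) * (a • u) = (a : B) * ((s : B) * u) := by
          show (s : B) * ((a : B) * u) = (a : B) * ((s : B) * u)
          ring
        rw [this]; exact A.mul_mem a.2 ihu
    exact hsP (hcP hsc)
  -- F2 : the residue field surjectivity consequence
  have hkey : ∀ c : C, ∃ s a : A, s ∉ P ∧
      Subring.inclusion h s * c - Subring.inclusion h a ∈ Qs.asIdeal := by
    intro c
    obtain ⟨s, a, hs, hmem⟩ := key_of_surjective h Qs (hres Qs).2 c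
    exact ⟨s, a, fun hp => hs (by rw [hQP]; exact hp), hmem⟩
  -- the extended conductor ideal in C
  let I : Ideal C := Ideal.span ((Subring.inclusion h) '' (𝔠 : Set A))
  have hImem : ∀ z ∈ I, ∀ c : C, ((c * z : C) : B) ∈ A := by
    intro z hz
    induction hz using Submodule.span_induction with
    | mem w hw =>
      obtain ⟨a, ha, rfl⟩ := hw
      intro c
      have : ((c * Subring.inclusion h a : C) : B) = (a : B) * (c : B) := by
        show (c : B) * (a : B) = (a : B) * (c : B)
        ring
      rw [this]
      exact ha (c : B) c.2
    | zero => intro c; simpa using A.zero_mem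
    | add u v hu hv ihu ihv =>
      intro c
      have : ((c * (u + v) : C) : B) = ((c * u : C) : B) + ((c * v : C) : B) := by
        push_cast; ring
      rw [this]; exact A.add_mem (ihu c) (ihv c)
    | smul r u hu ihu =>
      intro c
      have hru : r • u = r * u := rfl
      have : ((c * (r • u) : C) : B) = (((c * r) * u : C) : B) := by
        rw [hru]; push_cast; ring
      rw [this]; exact ihu (c * r)
  have hIA : ∀ z ∈ I, (z : B) ∈ A := by
    intro z hz
    have := hImem z hz 1
    simpa using this
  -- the saturation of I
  let I' : Ideal C :=
    { carrier := {z : C | ∃ s : A, s ∉ P ∧ Subring.inclusion h s * z ∈ I}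
      zero_mem' := ⟨1, fun hp => hPprime.ne_top (Ideal.eq_top_iff_one P |>.mpr hp), by
        simpa using I.zero_mem⟩
      add_mem' := by
        rintro z w ⟨s₁, hs₁, hz⟩ ⟨s₂, hs₂, hw⟩
        refine ⟨s₁ * s₂, fun hp => ((hPprime.mem_or_mem hp).elim hs₁ hs₂), ?_⟩
        have : Subring.inclusion h (s₁ * s₂) * (z + w)
            = Subring.inclusion h s₂ * (Subring.inclusion h s₁ * z)
              + Subring.inclusion h s₁ * (Subring.inclusion h s₂ * w) := by
          rw [map_mul]; ring
        rw [this]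
        exact I.add_mem (I.mul_mem_left _ hz) (I.mul_mem_left _ hw)
      smul_mem' := by
        rintro c z ⟨s, hs, hz⟩
        refine ⟨s, hs, ?_⟩
        have : Subring.inclusion h s * (c • z) = c * (Subring.inclusion h s * z) := by
          rw [smul_eq_mul]; ring
        rw [this]
        exact I.mul_mem_left _ hz }
  have hII' : I ≤ I' := by
    intro z hz
    exact ⟨1, fun hp => hPprime.ne_top (Ideal.eq_top_iff_one P |>.mpr hp), by simpa using hz⟩
  -- Q is contained in the radical of I'
  have hrad : Qs.asIdeal ≤ I'.radical := by
    intro q hq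
    rw [Ideal.mem_radical_iff]
    by_contra hno
    push_neg at hno
    set T : Submonoid C :=
      Submonoid.closure ({q} ∪ (Subring.inclusion h '' (P.primeCompl : Set A))) with hTdef
    have hshape : ∀ t ∈ T, ∃ s : A, s ∉ P ∧ ∃ n : ℕ, t = Subring.inclusion h s * q ^ n := by
      intro t ht
      induction ht using Submonoid.closure_induction with
      | mem z hz =>
        rcases hz with hz | ⟨a, ha, rfl⟩
        · rw [Set.mem_singleton_iff] at hz
          subst hz
          exact ⟨1, fun hp => hPprime.ne_top (Ideal.eq_top_iff_one P |>.mpr hp), 1, by simp⟩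
        · exact ⟨a, ha, 0, by simp⟩
      | one => exact ⟨1, fun hp => hPprime.ne_top (Ideal.eq_top_iff_one P |>.mpr hp), 0, by simp⟩
      | mul u v hu hv ihu ihv =>
        obtain ⟨s₁, hs₁, n₁, rfl⟩ := ihu
        obtain ⟨s₂, hs₂, n₂, rfl⟩ := ihv
        refine ⟨s₁ * s₂, fun hp => ((hPprime.mem_or_mem hp).elim hs₁ hs₂), n₁ + n₂, ?_⟩
        rw [map_mul, pow_add]; ring
    have hdisj : Disjoint (I' : Set C) (T : Set C) := by
      rw [Set.disjoint_right]
      intro t htT htI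
      obtain ⟨s, hs, n, rfl⟩ := hshape t htT
      obtain ⟨s', hs', hmem⟩ := htI
      have : Subring.inclusion h (s' * s) * q ^ n ∈ I := by
        have heq : Subring.inclusion h (s' * s) * q ^ n
            = Subring.inclusion h s' * (Subring.inclusion h s * q ^ n) := by
          rw [map_mul]; ring
        rw [heq]; exact hmem
      exact hno n ⟨s' * s, fun hp => ((hPprime.mem_or_mem hp).elim hs' hs), this⟩
    obtain ⟨Q', hQ'p, hQ'le, hQ'disj⟩ := Ideal.exists_le_prime_disjoint I' T hdisj
    haveI := hQ'p
    have h1 : 𝔠 ≤ Q'.comap (Subring.inclusion h) := by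
      intro a ha
      exact Ideal.mem_comap.mpr (hQ'le (hII' (Ideal.subset_span ⟨a, ha, rfl⟩)))
    have h2 : Q'.comap (Subring.inclusion h) ≤ P := by
      intro a ha
      by_contra hap
      have haT : Subring.inclusion h a ∈ T :=
        Submonoid.subset_closure (Or.inr ⟨a, hap, rfl⟩)
      exact Set.disjoint_left.mp hQ'disj (Ideal.mem_comap.mp ha) haT
    have hPeq : Q'.comap (Subring.inclusion h) = P :=
      le_antisymm h2 (hPmin.2 ⟨Ideal.IsPrime.comap _, h1⟩ h2)
    have hptseq : PrimeSpectrum.comap (Subring.inclusion h) ⟨Q', hQ'p⟩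
        = PrimeSpectrum.comap (Subring.inclusion h) Qs := by
      rw [hQs]
      exact PrimeSpectrum.ext hPeq
    have hQ'eq : (⟨Q', hQ'p⟩ : PrimeSpectrum C) = Qs := hspec.1 hptseq
    have hqQ' : q ∈ Q' := by
      rw [show Q' = Qs.asIdeal from congrArg PrimeSpectrum.asIdeal hQ'eq]
      exact hq
    have hqT : q ∈ T := Submonoid.subset_closure (Or.inl rfl)
    exact Set.disjoint_left.mp hQ'disj hqQ' hqT
  -- C is a Noetherian ring
  haveI : IsNoetherian A CA := inferInstance
  let eCA : CA ≃ₗ[A] C :=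
    { toFun := fun x => (⟨x.1, x.2⟩ : C)
      invFun := fun x => ⟨x.1, x.2⟩
      left_inv := fun x => rfl
      right_inv := fun x => rfl
      map_add' := fun x y => rfl
      map_smul' := fun a x => rfl }
  haveI : IsNoetherian A C := isNoetherian_of_linearEquiv eCA
  haveI : IsNoetherian C C := isNoetherian_of_tower A ‹IsNoetherian A C›
  haveI : IsNoetherianRing C := isNoetherianRing_iff.mpr ‹IsNoetherian C C›
  have hQfg : Qs.asIdeal.FG := IsNoetherian.noetherian Qs.asIdeal
  obtain ⟨k0, hk0⟩ := Ideal.exists_pow_le_of_le_radical_of_fg hrad hQfg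
  have hk : Qs.asIdeal ^ (k0 + 1) ≤ I' :=
    le_trans (Ideal.pow_le_pow_right (Nat.le_succ k0)) hk0
  -- the chain condition
  set S : ℕ → Prop := fun j => ∀ q : C, q ∈ Qs.asIdeal ^ j →
    ∃ s : A, s ∉ P ∧ ((s : B) * (q : B) ∈ A) with hSdef
  have hSk : S (k0 + 1) := by
    intro q hq
    obtain ⟨s, hs, hsq⟩ := hk hq
    exact ⟨s, hs, hIA _ hsq⟩
  have hS1 : ¬ S 1 := by
    intro hS1
    obtain ⟨c₀, hc₀⟩ := hF4
    obtain ⟨s, a, hs, hmem⟩ := hkey c₀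
    obtain ⟨s', hs', hs'q⟩ := hS1 _ (by rw [pow_one]; exact hmem)
    have hval : ((s' : B) * ((Subring.inclusion h s * c₀ - Subring.inclusion h a : C) : B)) ∈ A :=
      hs'q
    have hfin : (((s' * s : A) : B) * (c₀ : B)) ∈ A := by
      have heq : ((s' * s : A) : B) * (c₀ : B)
          = (s' : B) * ((Subring.inclusion h s * c₀ - Subring.inclusion h a : C) : B)
            + (s' : B) * (a : B) := by
        show (s' : B) * (s : B) * (c₀ : B)
            = (s' : B) * ((s : B) * (c₀ : B) - (a : B)) + (s' : B) * (a : B)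
        ring
      rw [heq]
      exact A.add_mem hval (A.mul_mem s'.2 a.2)
    exact hc₀ (s' * s) (fun hp => ((hPprime.mem_or_mem hp).elim hs' hs)) hfin
  have hex : ∃ j, S (j + 1) := ⟨k0, hSk⟩
  set m := Nat.find hex with hmdef
  have hSm1 : S (m + 1) := Nat.find_spec hex
  have hmpos : 1 ≤ m := by
    by_contra hm0
    push_neg at hm0
    interval_cases m
    exact hS1 hSm1
  have hSmnot : ¬ S m := by
    have : m - 1 < m := by omega
    have := Nat.find_min hex this
    have hmeq : m - 1 + 1 = m := by omega
    rwa [hmeq] at this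
  have hSmnot' : ∃ q : C, q ∈ Qs.asIdeal ^ m ∧ ∀ s : A, s ∉ P → ((s : B) * (q : B)) ∉ A := by
    by_contra hcon
    push_neg at hcon
    exact hSmnot (fun q hq => hcon q hq)
  obtain ⟨q, hq, hq'⟩ := hSmnot'
  -- q ^ 2 and q ^ 3 land in Q ^ (m + 1)
  have hq2 : q ^ 2 ∈ Qs.asIdeal ^ (m + 1) := by
    have h2m : q ^ 2 ∈ Qs.asIdeal ^ (m * 2) := by
      rw [pow_mul]; exact Ideal.pow_mem_pow hq 2
    exact Ideal.pow_le_pow_right (by omega) h2m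
  have hq3 : q ^ 3 ∈ Qs.asIdeal ^ (m + 1) := by
    have h3m : q ^ 3 ∈ Qs.asIdeal ^ (m * 3) := by
      rw [pow_mul]; exact Ideal.pow_mem_pow hq 3
    exact Ideal.pow_le_pow_right (by omega) h3m
  obtain ⟨s₂, hs₂, hs₂q⟩ := hSm1 _ hq2
  obtain ⟨s₃, hs₃, hs₃q⟩ := hSm1 _ hq3
  have hcoe2 : ((q ^ 2 : C) : B) = (q : B) ^ 2 := by push_cast; ring
  have hcoe3 : ((q ^ 3 : C) : B) = (q : B) ^ 3 := by push_cast; ring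
  rw [hcoe2] at hs₂q
  rw [hcoe3] at hs₃q
  set bb : B := ((s₂ : B) * (s₃ : B)) * (q : B) with hbbdef
  have hbbA : bb ∉ A := by
    intro hA
    refine hq' (s₂ * s₃) (fun hp => ((hPprime.mem_or_mem hp).elim hs₂ hs₃)) ?_
    have : ((s₂ * s₃ : A) : B) * (q : B) = bb := by push_cast [hbbdef]; ring
    rwa [this]
  have hbb2 : bb ^ 2 ∈ A := by
    have : bb ^ 2 = ((s₂ : B) * (q : B) ^ 2) * ((s₂ : B) * (s₃ : B) ^ 2) := by
      rw [hbbdef]; ring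
    rw [this]
    exact A.mul_mem hs₂q (A.mul_mem s₂.2 (pow_mem s₃.2 2))
  have hbb3 : bb ^ 3 ∈ A := by
    have : bb ^ 3 = ((s₃ : B) * (q : B) ^ 3) * ((s₂ : B) ^ 3 * (s₃ : B) ^ 2) := by
      rw [hbbdef]; ring
    rw [this]
    exact A.mul_mem hs₃q (A.mul_mem (pow_mem s₂.2 3) (pow_mem s₃.2 2))
  exact hbbA (H23 bb hbb2 hbb3)


end Backward

/-- **Hamann/Swan's criterion.**  Let `A ⊆ B` be a finite integral extension of reduced
Noetherian rings and let `e > f > 1` be relatively prime integers.  Then `A` is seminormal in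
`B` if and only if every `b ∈ B` with `b ^ e ∈ A` and `b ^ f ∈ A` lies in `A`. -/
theorem seminormalIn_iff_pow {B : Type*} [CommRing B] [IsReduced B] [IsNoetherianRing B]
    (A : Subring B) [IsNoetherianRing A] [IsReduced A]
    [Module.Finite A B] [Algebra.IsIntegral A B]
    (e f : ℕ) (hf : 1 < f) (hef : f < e) (hcop : Nat.Coprime e f) :
    A.IsSeminormalIn ↔ ∀ b : B, b ^ e ∈ A → b ^ f ∈ A → b ∈ A :=
  ⟨fun hsn b hbe hbf => forward_dir A e f hf hef hcop hsn b hbe hbf,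
    fun hpow => backward_dir A e f hf hef hpow⟩
end

section
/- Let p be a prime, and let A ⊆ B be a finite integral extension of reduced Noetherian rings with A of characteristic p. Then the following are equivalent: (i) A is weakly normal in B, i.e., every intermediate ring A ⊆ C ⊆ B for which the map Spec C → Spec A is bijective and, for each prime Q of C lying over P = Q ∩ A, the induced extension of residue fields κ(P) → κ(Q) is purely inseparable, satisfies C = A; (ii) every element b ∈ B with b^p ∈ A lies in A. -/
open IsLocalRing

/-- A ring homomorphism of fields (in characteristic `p`) is *purely inseparable* if every
element of the target has some `p ^ n`-th power lying in the image. -/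
def RingHom.IsPurelyInseparableOfChar (p : ℕ) {K L : Type*} [CommRing K] [CommRing L]
    (f : K →+* L) : Prop :=
  ∀ x : L, ∃ n : ℕ, x ^ p ^ n ∈ Set.range f

/-- An extension `A ≤ C` of subrings of `B` is *weakly subintegral* (in characteristic `p`) if
`Spec C → Spec A` is bijective and all the induced maps of residue fields are purely
inseparable. -/
def Subring.IsWeaklySubintegralIn {B : Type*} [CommRing B] (p : ℕ) (A C : Subring B)
    (h : A ≤ C) : Prop :=
  Function.Bijective (PrimeSpectrum.comap (Subring.inclusion h)) ∧
    ∀ Q : PrimeSpectrum C, (residueFieldMapOfLE h Q).IsPurelyInseparableOfChar p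

/-- A subring `A` of `B` is *weakly normal in `B`* if the only weakly subintegral intermediate
extension `A ⊆ C ⊆ B` is `C = A`. -/
def Subring.IsWeaklyNormalIn {B : Type*} [CommRing B] (p : ℕ) (A : Subring B) : Prop :=
  ∀ C : Subring B, (h : A ≤ C) → A.IsWeaklySubintegralIn p C h → C = A

lemma exists_num_den {B : Type*} [CommRing B] {A C : Subring B} (h : A ≤ C) (p : ℕ)
    (Q : PrimeSpectrum C)
    (hres : (residueFieldMapOfLE h Q).IsPurelyInseparableOfChar p) (c : C) :
    ∃ (n : ℕ) (a t : A), t ∉ Q.asIdeal.comap (Subring.inclusion h) ∧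
      c ^ p ^ n * (Subring.inclusion h t) - Subring.inclusion h a ∈ Q.asIdeal := by
  haveI : Q.asIdeal.IsPrime := Q.isPrime
  set L := Localization.AtPrime Q.asIdeal
  obtain ⟨n, y, hy⟩ := hres (residue L (algebraMap C L c))
  obtain ⟨z, rfl⟩ := residue_surjective y
  obtain ⟨⟨a, t⟩, rfl⟩ :=
    IsLocalization.mk'_surjective (Q.asIdeal.comap (Subring.inclusion h)).primeCompl z
  dsimp only at hy
  refine ⟨n, a, t, t.2, ?_⟩
  rw [← IsLocalization.AtPrime.to_map_mem_maximal_iff L Q.asIdeal, ← residue_eq_zero_iff]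
  have ht' : Subring.inclusion h (t : A) ∈ Q.asIdeal.primeCompl :=
    (Localization.le_comap_primeCompl_iff.mpr (le_of_eq rfl)) t.2
  have h1 : residueFieldMapOfLE h Q
      (residue _ (IsLocalization.mk' (Localization.AtPrime
        (Q.asIdeal.comap (Subring.inclusion h))) (a : A) t)) =
      residue L (IsLocalization.mk' L (Subring.inclusion h a)
        (⟨Subring.inclusion h (t : A), ht'⟩ : Q.asIdeal.primeCompl)) := by
    show ResidueField.map _ _ = _
    rw [ResidueField.map_residue, Localization.localRingHom_mk']
  rw [h1] at hy
  have h2 : residue L (algebraMap C L (c ^ p ^ n * Subring.inclusion h t))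
      = residue L (algebraMap C L (Subring.inclusion h a)) := by
    rw [map_mul, map_mul, map_pow, map_pow, ← hy]
    rw [← map_mul]
    congr 1
    exact IsLocalization.mk'_spec L (Subring.inclusion h (a : A)) _
  rw [map_sub, map_sub, h2, sub_self]

lemma pow_pow_mem {B : Type*} [CommRing B] {A : Subring B} {p : ℕ}
    (hpow : ∀ b : B, b ^ p ∈ A → b ∈ A) (b : B) (n : ℕ) (hb : b ^ p ^ n ∈ A) : b ∈ A := by
  induction n with
  | zero => simpa using hb
  | succ n ih =>
    apply ih
    apply hpow
    rw [← pow_mul, ← pow_succ]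
    exact hb

lemma exists_mem_map_of_mem_prime {B : Type*} [CommRing B] {A C : Subring B} (h : A ≤ C)
    (hinj : Function.Injective (PrimeSpectrum.comap (Subring.inclusion h)))
    {P : Ideal A} [hPp : P.IsPrime] (Q : PrimeSpectrum C)
    (hQ : PrimeSpectrum.comap (Subring.inclusion h) Q = ⟨P, hPp⟩)
    {q : C} (hq : q ∈ Q.asIdeal) :
    ∃ (N : ℕ) (v : A), v ∉ P ∧
      Subring.inclusion h v * q ^ N ∈ P.map (Subring.inclusion h) := by
  by_contra hcon
  push_neg at hcon
  set W := (P.primeCompl.map (Subring.inclusion h).toMonoidHom) ⊔ Submonoid.powers q with hW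
  have hdisj : Disjoint ((P.map (Subring.inclusion h) : Ideal C) : Set C) (W : Set C) := by
    rw [Set.disjoint_left]
    intro x hx hxW
    have hxW' : x ∈ W := hxW
    rw [hW, Submonoid.mem_sup] at hxW'
    obtain ⟨y, hy, z, hz, rfl⟩ := hxW'
    obtain ⟨v, hv, rfl⟩ := hy
    obtain ⟨N, rfl⟩ := hz
    exact hcon N v hv hx
  obtain ⟨Q₁, hQ₁p, hle, hdisj₁⟩ := Ideal.exists_le_prime_disjoint _ W hdisj
  have hcomap : Q₁.comap (Subring.inclusion h) = P := by
    ext a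
    constructor
    · intro ha
      by_contra haP
      refine Set.disjoint_left.mp hdisj₁ ha ?_
      exact (le_sup_left : P.primeCompl.map (Subring.inclusion h).toMonoidHom ≤ W)
        ⟨a, haP, rfl⟩
    · intro ha
      exact hle (Ideal.mem_map_of_mem _ ha)
  have heq : PrimeSpectrum.comap (Subring.inclusion h) ⟨Q₁, hQ₁p⟩ = (⟨P, hPp⟩ : PrimeSpectrum A) := by
    apply PrimeSpectrum.ext
    simpa using hcomap
  have hQQ : (⟨Q₁, hQ₁p⟩ : PrimeSpectrum C) = Q := hinj (heq.trans hQ.symm)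
  have hqQ₁ : q ∈ Q₁ := by
    have := congrArg PrimeSpectrum.asIdeal hQQ
    simp only at this
    rw [this]
    exact hq
  exact Set.disjoint_left.mp hdisj₁ hqQ₁
    ((le_sup_right : Submonoid.powers q ≤ W) (Submonoid.mem_powers q))

lemma exists_pow_smul_mem {A : Type*} [CommRing A] [IsNoetherianRing A] {I P : Ideal A}
    (hP : P ∈ I.minimalPrimes) :
    ∃ (k : ℕ) (w : A), w ∉ P ∧ ∀ y ∈ P ^ k, w * y ∈ I := by
  haveI hPp : P.IsPrime := hP.1.1
  -- the saturation of I at P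
  let I' : Ideal A :=
    { carrier := {r | ∃ v ∉ P, v * r ∈ I}
      add_mem' := by
        rintro r s ⟨v, hv, hvr⟩ ⟨u, hu, hus⟩
        refine ⟨v * u, fun hvu => ((hPp.mem_or_mem hvu).elim hv hu), ?_⟩
        have : v * u * (r + s) = u * (v * r) + v * (u * s) := by ring
        rw [this]
        exact I.add_mem (I.mul_mem_left u hvr) (I.mul_mem_left v hus)
      zero_mem' := ⟨1, hPp.ne_top ∘ (Ideal.eq_top_iff_one P).mpr, by simpa using I.zero_mem⟩
      smul_mem' := by
        rintro x r ⟨v, hv, hvr⟩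
        refine ⟨v, hv, ?_⟩
        have : v * (x • r) = x * (v * r) := by simp [smul_eq_mul]; ring
        rw [this]
        exact I.mul_mem_left x hvr }
  have hrad : P ≤ I'.radical := by
    intro x hx
    by_contra hnot
    rw [Ideal.mem_radical_iff] at hnot
    push_neg at hnot
    set W := P.primeCompl ⊔ Submonoid.powers x with hW
    have hdisj : Disjoint (I : Set A) (W : Set A) := by
      rw [Set.disjoint_left]
      intro y hy hyW
      have hyW' : y ∈ W := hyW
      rw [hW, Submonoid.mem_sup] at hyW'
      obtain ⟨v, hv, z, hz, rfl⟩ := hyW'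
      obtain ⟨m, rfl⟩ := hz
      exact hnot m ⟨v, hv, hy⟩
    obtain ⟨P₁, hP₁p, hIP₁, hdisj₁⟩ := Ideal.exists_le_prime_disjoint I W hdisj
    have hP₁P : P₁ ≤ P := by
      intro r hr
      by_contra hrP
      exact Set.disjoint_left.mp hdisj₁ hr ((le_sup_left : P.primeCompl ≤ W) hrP)
    have hPP₁ : P ≤ P₁ := hP.2 ⟨hP₁p, hIP₁⟩ hP₁P
    have hxW : x ∈ W := (le_sup_right : Submonoid.powers x ≤ W) (Submonoid.mem_powers x)
    exact Set.disjoint_left.mp hdisj₁ (hPP₁ hx) hxW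
  obtain ⟨K, hK⟩ := Ideal.exists_pow_le_of_le_radical_of_fg hrad (IsNoetherian.noetherian P)
  obtain ⟨G, hG⟩ := IsNoetherian.noetherian (P ^ K)
  classical
  have hmem : ∀ g ∈ G, ∃ v, v ∉ P ∧ v * g ∈ I := by
    intro g hg
    exact hK (hG ▸ Ideal.subset_span hg)
  let vf : A → A := fun g => if hg : ∃ v, v ∉ P ∧ v * g ∈ I then hg.choose else 1
  refine ⟨K, ∏ g ∈ G, vf g, ?_, ?_⟩
  · intro hprod
    have h1 : (1 : A) ∉ P := hPp.ne_top ∘ (Ideal.eq_top_iff_one P).mpr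
    refine Finset.prod_induction vf (fun a => a ∉ P)
      (fun a b ha hb hab => (hPp.mem_or_mem hab).elim ha hb) h1 ?_ hprod
    intro g hg
    by_cases hex : ∃ v, v ∉ P ∧ v * g ∈ I
    · simp only [vf, dif_pos hex]; exact hex.choose_spec.1
    · simp only [vf, dif_neg hex]; exact h1
  · intro y hy
    rw [← hG] at hy
    induction hy using Submodule.span_induction with
    | mem g hg =>
      have hex : ∃ v, v ∉ P ∧ v * g ∈ I := hmem g hg
      have hv : vf g * g ∈ I := by simp only [vf, dif_pos hex]; exact hex.choose_spec.2
      rw [← Finset.mul_prod_erase G vf hg, mul_comm (vf g), mul_assoc]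
      exact I.mul_mem_left _ hv
    | zero => simpa using I.zero_mem
    | add a b _ _ ha hb => rw [mul_add]; exact I.add_mem ha hb
    | smul a x _ hx =>
      rw [smul_eq_mul, mul_left_comm]
      exact I.mul_mem_left a hx

private lemma wn_forward {B : Type*} [CommRing B] (p : ℕ) (hp : p.Prime) (A : Subring B) [CharP A p]
    [Algebra.IsIntegral A B] (hw : A.IsWeaklyNormalIn p) : ∀ b : B, b ^ p ∈ A → b ∈ A := by
  intro b hb
  haveI := Fact.mk hp
  haveI hBp : CharP B p := charP_of_injective_ringHom (f := A.subtype) Subtype.val_injective p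
  set C : Subring B := (Algebra.adjoin A ({b} : Set B)).toSubring with hC
  have hAC : A ≤ C := by
    intro x hx
    have : algebraMap A B ⟨x, hx⟩ ∈ Algebra.adjoin A ({b} : Set B) :=
      Subalgebra.algebraMap_mem _ _
    exact this
  have hCp : ∀ c ∈ C, c ^ p ∈ A := by
    intro c hc
    rw [hC, Subalgebra.mem_toSubring] at hc
    induction hc using Algebra.adjoin_induction with
    | mem x hx => rw [Set.mem_singleton_iff] at hx; rw [hx]; exact hb
    | algebraMap r =>
      show ((r : B)) ^ p ∈ A
      exact A.pow_mem r.2 p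
    | add x y hx hy ihx ihy => rw [add_pow_char]; exact A.add_mem ihx ihy
    | mul x y hx hy ihx ihy => rw [mul_pow]; exact A.mul_mem ihx ihy
  -- C is integral over A
  letI : Algebra A C := (Subring.inclusion hAC).toAlgebra
  haveI : IsScalarTower A C B := IsScalarTower.of_algebraMap_eq fun _ => rfl
  haveI hint : Algebra.IsIntegral A C := by
    constructor
    intro c
    refine IsIntegral.tower_bot (B := B)
      (fun x y hxy => Subtype.ext hxy : Function.Injective (algebraMap C B)) ?_
    exact Algebra.IsIntegral.isIntegral (R := A) (c : B)
  have hsub : A.IsWeaklySubintegralIn p C hAC := by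
    constructor
    · constructor
      · -- injectivity
        intro Q1 Q2 heq
        have hco : Q1.asIdeal.comap (Subring.inclusion hAC)
            = Q2.asIdeal.comap (Subring.inclusion hAC) := by
          have := congrArg PrimeSpectrum.asIdeal heq
          simpa using this
        have key : ∀ Q1 Q2 : PrimeSpectrum C,
            Q1.asIdeal.comap (Subring.inclusion hAC) = Q2.asIdeal.comap (Subring.inclusion hAC) →
            Q1.asIdeal ≤ Q2.asIdeal := by
          intro Q1 Q2 he c hc
          haveI := Q2.isPrime
          set a : A := ⟨(c : B) ^ p, hCp _ c.2⟩ with ha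
          have hca : (Subring.inclusion hAC) a = c ^ p := by
            apply Subtype.ext; rfl
          have h1 : a ∈ Q1.asIdeal.comap (Subring.inclusion hAC) := by
            rw [Ideal.mem_comap, hca]
            exact Ideal.pow_mem_of_mem _ hc p hp.pos
          rw [he, Ideal.mem_comap, hca] at h1
          exact Q2.isPrime.mem_of_pow_mem p h1
        exact PrimeSpectrum.ext (le_antisymm (key Q1 Q2 hco) (key Q2 Q1 hco.symm))
      · -- surjectivity
        intro P
        haveI := P.isPrime
        have hinj : Function.Injective (algebraMap A C) := by
          rw [RingHom.algebraMap_toAlgebra]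
          intro x y e
          have e2 := congrArg Subtype.val e
          exact Subtype.ext e2
        obtain ⟨Qid, -, hQp, hQcomap⟩ :=
          Ideal.exists_ideal_over_prime_of_isIntegral (R := A) (S := C) P.asIdeal ⊥
            (fun x hx => by
              have hx0 : x = 0 := hinj (by
                rw [show (algebraMap A C) x = 0 from by simpa using hx, map_zero])
              rw [hx0]; exact P.asIdeal.zero_mem)
        haveI := hQp
        refine ⟨⟨Qid, hQp⟩, PrimeSpectrum.ext ?_⟩
        exact hQcomap
    · -- residue fields
      intro Q
      haveI := Q.isPrime
      intro x
      obtain ⟨z, rfl⟩ := residue_surjective x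
      obtain ⟨⟨c, s⟩, rfl⟩ := IsLocalization.mk'_surjective Q.asIdeal.primeCompl z
      dsimp only
      refine ⟨1, ?_⟩
      set a_c : A := ⟨(c : B) ^ p, hCp _ c.2⟩ with ha_c
      set a_s : A := ⟨((s : C) : B) ^ p, hCp _ (s : C).2⟩ with ha_s
      have e_s : (Subring.inclusion hAC) a_s = (s : C) ^ p := by
        apply Subtype.ext; rfl
      have hsP : a_s ∈ (Q.asIdeal.comap (Subring.inclusion hAC)).primeCompl := by
        intro hmem
        have hmem' : (Subring.inclusion hAC) a_s ∈ Q.asIdeal := hmem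
        rw [e_s] at hmem'
        exact s.2 (Q.isPrime.mem_of_pow_mem p hmem')
      set L := Localization.AtPrime Q.asIdeal
      have key : (residue L (IsLocalization.mk' L c s)) ^ p ^ 1 =
          residueFieldMapOfLE hAC Q (residue _ (IsLocalization.mk'
            (Localization.AtPrime (Q.asIdeal.comap (Subring.inclusion hAC))) a_c ⟨a_s, hsP⟩)) := by
        have e_c : (Subring.inclusion hAC) a_c = c ^ p := by apply Subtype.ext; rfl
        have key2 : ∀ pf : (Subring.inclusion hAC) a_s ∈ Q.asIdeal.primeCompl,
            IsLocalization.mk' L ((Subring.inclusion hAC) a_c)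
              (⟨(Subring.inclusion hAC) a_s, pf⟩ : Q.asIdeal.primeCompl)
              = IsLocalization.mk' L c s ^ p := by
          intro pf
          rw [e_c, ← IsLocalization.mk'_pow]
          congr 1
        show _ = ResidueField.map _ _
        rw [ResidueField.map_residue, Localization.localRingHom_mk']
        exact (congrArg (fun e => residue L (IsLocalization.mk' L c s) ^ e) (pow_one p)).trans
          ((map_pow _ _ _).symm.trans (congrArg (residue L) (key2 _).symm))
      rw [key]
      exact Set.mem_range_self _
  have hCA := hw C hAC hsub
  have hbC : b ∈ C := by
    rw [hC, Subalgebra.mem_toSubring]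
    exact Algebra.self_mem_adjoin_singleton A b
  rwa [hCA] at hbC

private lemma wn_reverse {B : Type*} [CommRing B]
    (p : ℕ) (hp : p.Prime) (A : Subring B) [IsNoetherianRing A] [CharP A p]
    [Module.Finite A B]
    (hpow : ∀ b : B, b ^ p ∈ A → b ∈ A) : A.IsWeaklyNormalIn p := by
  intro C hAC hwsi
  obtain ⟨hbij, hres⟩ := hwsi
  haveI := Fact.mk hp
  haveI hBp : CharP B p := charP_of_injective_ringHom (f := A.subtype) Subtype.val_injective p
  have hCA : ∀ c : C, (c : B) ∈ A := by
    classical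
    let 𝔞 : Ideal A :=
      { carrier := {a : A | ∀ c : C, (a : B) * (c : B) ∈ A}
        add_mem' := by
          intro x y hx hy c
          have h' := A.add_mem (hx c) (hy c)
          have e : ((x + y : A) : B) * (c : B) = (x : B) * c + (y : B) * c := by
            push_cast; ring
          rwa [e]
        zero_mem' := by
          intro c
          have e : ((0 : A) : B) * (c : B) = 0 := by push_cast; ring
          rw [e]; exact A.zero_mem
        smul_mem' := by
          intro x a ha c
          have h' := A.mul_mem x.2 (ha c)
          have e : ((x • a : A) : B) * (c : B) = (x : B) * ((a : B) * c) := by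
            push_cast [smul_eq_mul]; ring
          rwa [e] }
    by_cases htop : (1 : A) ∈ 𝔞
    · intro c
      have := htop c
      simpa using this
    · exfalso
      obtain ⟨Pm, hPmmax, hlePm⟩ :=
        Ideal.exists_le_maximal 𝔞 ((Ideal.ne_top_iff_one 𝔞).mpr htop)
      haveI := hPmmax.isPrime
      obtain ⟨P, hPmin, hPle⟩ := Ideal.exists_minimalPrimes_le hlePm
      haveI hPp : P.IsPrime := hPmin.1.1
      have h𝔞P : 𝔞 ≤ P := hPmin.1.2
      obtain ⟨Q, hQ⟩ := hbij.2 ⟨P, hPp⟩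
      have hPQ : Q.asIdeal.comap (Subring.inclusion hAC) = P := by
        have := congrArg PrimeSpectrum.asIdeal hQ
        simpa using this
      obtain ⟨k, w, hwP, hwk⟩ := exists_pow_smul_mem (I := 𝔞) hPmin
      -- key step
      have hcoe : ∀ x : A, ((Subring.inclusion hAC x : C) : B) = (x : B) := fun _ => rfl
      have key : ∀ c : C, ∃ u : A, u ∉ P ∧ (u : B) * (c : B) ∈ A := by
        intro c
        obtain ⟨n, a, t, htP, hqQ⟩ := exists_num_den hAC p Q (hres Q) c
        rw [hPQ] at htP
        set q : C := c ^ p ^ n * (Subring.inclusion hAC t) - Subring.inclusion hAC a with hqdef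
        obtain ⟨N, v, hvP, hvq⟩ := exists_mem_map_of_mem_prime hAC hbij.1 Q hQ hqQ
        obtain ⟨m, hm⟩ : ∃ m, N * k ≤ p ^ m :=
          ⟨N * k, le_of_lt (Nat.lt_pow_self hp.one_lt)⟩
        have h1 : (Subring.inclusion hAC v) ^ k * q ^ (N * k)
            ∈ (P ^ k).map (Subring.inclusion hAC) := by
          have h0 : ((Subring.inclusion hAC v) * q ^ N) ^ k
              ∈ (P.map (Subring.inclusion hAC)) ^ k := Ideal.pow_mem_pow hvq k
          rw [← Ideal.map_pow] at h0
          have e : ((Subring.inclusion hAC v) * q ^ N) ^ k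
              = (Subring.inclusion hAC v) ^ k * q ^ (N * k) := by
            rw [mul_pow, ← pow_mul]
          rwa [e] at h0
        have h2 : (Subring.inclusion hAC v) ^ k * q ^ (p ^ m)
            ∈ (P ^ k).map (Subring.inclusion hAC) := by
          have hqq : q ^ (p ^ m) = q ^ (N * k) * q ^ (p ^ m - N * k) := by
            rw [← pow_add, Nat.add_sub_cancel' hm]
          rw [hqq, ← mul_assoc]
          exact Ideal.mul_mem_right _ _ h1
        have h3 : ∀ z ∈ Ideal.span ((Subring.inclusion hAC) '' ((P ^ k : Ideal A) : Set A)),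
            ∀ c2 : C, (w : B) * (z : B) * (c2 : B) ∈ A := by
          intro z hz
          induction hz using Submodule.span_induction with
          | mem x hx =>
            obtain ⟨y, hy, rfl⟩ := hx
            intro c2
            have h𝔞y : ∀ c3 : C, ((w * y : A) : B) * (c3 : B) ∈ A := hwk y hy
            have := h𝔞y c2
            have e : ((w * y : A) : B) * (c2 : B)
                = (w : B) * ((Subring.inclusion hAC y : C) : B) * (c2 : B) := by
              push_cast; rfl
            rwa [e] at this
          | zero =>
            intro c2
            have e : (w : B) * ((0 : C) : B) * (c2 : B) = 0 := by push_cast; ring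
            rw [e]; exact A.zero_mem
          | add x y hx hy ihx ihy =>
            intro c2
            have e : (w : B) * (((x + y : C)) : B) * (c2 : B)
                = (w : B) * (x : B) * (c2 : B) + (w : B) * (y : B) * (c2 : B) := by
              push_cast; ring
            rw [e]; exact A.add_mem (ihx c2) (ihy c2)
          | smul c0 x hx ihx =>
            intro c2
            have hthis := ihx (c0 * c2)
            have e : (w : B) * ((c0 • x : C) : B) * (c2 : B)
                = (w : B) * (x : B) * ((c0 * c2 : C) : B) := by
              push_cast [smul_eq_mul]; ring
            rw [e]; exact hthis
        have hWq : ((w : B) * (v : B) ^ k) * ((q : C) : B) ^ (p ^ m) ∈ A := by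
          have h4 := h3 _ h2 1
          have e : (w : B) * (((Subring.inclusion hAC v) ^ k * q ^ (p ^ m) : C) : B)
              * ((1 : C) : B) = ((w : B) * (v : B) ^ k) * ((q : C) : B) ^ (p ^ m) := by
            push_cast [hcoe]; ring
          rwa [e] at h4
        -- now the final computation in B
        obtain ⟨n1, hn1⟩ : ∃ n1, p ^ n = n1 + 1 :=
          ⟨p ^ n - 1, (Nat.succ_pred_eq_of_pos (pow_pos hp.pos n)).symm⟩
        obtain ⟨M1, hM1⟩ : ∃ M1, p ^ n * p ^ m = M1 + 1 :=
          ⟨p ^ n * p ^ m - 1,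
            (Nat.succ_pred_eq_of_pos (Nat.mul_pos (pow_pos hp.pos n) (pow_pos hp.pos m))).symm⟩
        set sB : B := (c : B) with hsB
        set qB : B := ((q : C) : B) with hqB0
        set W : B := (w : B) * (v : B) ^ k with hWdef
        have hqB : qB = sB ^ p ^ n * (t : B) - (a : B) := by
          rw [hqB0, hqdef]; push_cast; rfl
        have e1 : (a : B) + qB = sB ^ p ^ n * (t : B) := by rw [hqB]; ring
        have e2 : ((a : B) + qB) ^ p ^ m = (a : B) ^ p ^ m + qB ^ p ^ m :=
          add_pow_char_pow _ _ p m
        have e3 : ((W * (t : B)) * sB) ^ p ^ (n + m)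
            = (W ^ p ^ n * (t : B) ^ n1) ^ p ^ m * ((sB ^ p ^ n * (t : B)) ^ p ^ m) := by
          rw [pow_add, pow_mul, ← mul_pow]
          congr 1
          rw [hn1]; ring
        have e4 : (W ^ p ^ n * (t : B) ^ n1) ^ p ^ m
            = W ^ M1 * ((t : B) ^ (n1 * p ^ m) * W) := by
          rw [mul_pow, ← pow_mul, ← pow_mul, hM1, pow_succ]; ring
        have hWA : W ∈ A := A.mul_mem w.2 (A.pow_mem v.2 k)
        have hfin : ((W * (t : B)) * sB) ^ p ^ (n + m) ∈ A := by
          rw [e3, ← e1, e2, mul_add]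
          refine A.add_mem ?_ ?_
          · exact A.mul_mem
              (A.pow_mem (A.mul_mem (A.pow_mem hWA _) (A.pow_mem t.2 _)) _)
              (A.pow_mem a.2 _)
          · have e5 : (W ^ p ^ n * (t : B) ^ n1) ^ p ^ m * qB ^ p ^ m
                = W ^ M1 * ((t : B) ^ (n1 * p ^ m) * (W * qB ^ p ^ m)) := by
              rw [e4]; ring
            rw [e5]
            exact A.mul_mem (A.pow_mem hWA M1)
              (A.mul_mem (A.pow_mem t.2 _) hWq)
        have hu : (W * (t : B)) * sB ∈ A := pow_pow_mem hpow _ _ hfin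
        refine ⟨w * v ^ k * t, ?_, ?_⟩
        · intro hmem
          rcases hPp.mem_or_mem hmem with h' | h'
          · rcases hPp.mem_or_mem h' with h'' | h''
            · exact hwP h''
            · exact hvP (hPp.mem_of_pow_mem k h'')
          · exact htP h'
        · have e : ((w * v ^ k * t : A) : B) * (c : B) = (W * (t : B)) * sB := by
            push_cast; ring
          rw [e]; exact hu
      -- assemble the contradiction
      haveI : IsNoetherian A B := inferInstance
      let CM : Submodule A B :=
        { carrier := (C : Set B)
          add_mem' := fun hx hy => C.add_mem hx hy
          zero_mem' := C.zero_mem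
          smul_mem' := fun a x hx => by
            have : (a : B) * x ∈ C := C.mul_mem (hAC a.2) hx
            exact this }
      obtain ⟨G, hG⟩ := IsNoetherian.noetherian CM
      let uf : B → A := fun g => if hg : g ∈ C then (key ⟨g, hg⟩).choose else 1
      have hufP : ∀ g, uf g ∉ P := by
        intro g
        by_cases hg : g ∈ C
        · simp only [uf, dif_pos hg]
          exact (key ⟨g, hg⟩).choose_spec.1
        · simp only [uf, dif_neg hg]
          exact fun h1 => hPp.ne_top ((Ideal.eq_top_iff_one P).mpr h1)
      set u : A := ∏ g ∈ G, uf g with hu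
      have huP : u ∉ P := by
        refine Finset.prod_induction uf (fun a => a ∉ P)
          (fun a b ha hb hab => (hPp.mem_or_mem hab).elim ha hb)
          (fun h1 => hPp.ne_top ((Ideal.eq_top_iff_one P).mpr h1)) (fun g _ => hufP g)
      have hall : ∀ x ∈ Submodule.span A (G : Set B), (u : B) * x ∈ A := by
        intro z hz
        induction hz using Submodule.span_induction with
        | mem x hx =>
          have hxC : x ∈ C := by
            have : x ∈ CM := hG ▸ Submodule.subset_span hx
            exact this
          have h6 : (uf x : B) * x ∈ A := by
            simp only [uf, dif_pos hxC]
            exact (key ⟨x, hxC⟩).choose_spec.2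
          have e : (u : B) * x = ((∏ g ∈ G.erase x, uf g : A) : B) * ((uf x : B) * x) := by
            rw [hu, ← Finset.mul_prod_erase G uf hx]
            push_cast; ring
          rw [e]
          exact A.mul_mem (SetLike.coe_mem _) h6
        | zero =>
          have e : (u : B) * (0 : B) = 0 := by ring
          rw [e]; exact A.zero_mem
        | add x y hx hy ihx ihy =>
          have e : (u : B) * (x + y) = (u : B) * x + (u : B) * y := by ring
          rw [e]; exact A.add_mem ihx ihy
        | smul a x hx ihx =>
          have e2 : a • x = (a : B) * x := rfl
          have e : (u : B) * (a • x) = (a : B) * ((u : B) * x) := by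
            rw [e2]; ring
          rw [e]; exact A.mul_mem a.2 ihx
      have hu𝔞 : u ∈ 𝔞 := by
        intro c
        have hcC : (c : B) ∈ CM := c.2
        rw [← hG] at hcC
        exact hall _ hcC
      exact huP (h𝔞P hu𝔞)
  exact le_antisymm (fun x hx => hCA ⟨x, hx⟩) hAC

/-- Let `p` be a prime and let `A ⊆ B` be a finite integral extension of reduced Noetherian
rings with `A` of characteristic `p`.  Then `A` is weakly normal in `B` if and only if every
`b ∈ B` with `b ^ p ∈ A` lies in `A`. -/
theorem weaklyNormalIn_iff_pow {B : Type*} [CommRing B] [IsReduced B] [IsNoetherianRing B]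
    (p : ℕ) (hp : p.Prime) (A : Subring B) [IsNoetherianRing A] [IsReduced A] [CharP A p]
    [Module.Finite A B] [Algebra.IsIntegral A B] :
    A.IsWeaklyNormalIn p ↔ ∀ b : B, b ^ p ∈ A → b ∈ A :=
  ⟨fun hw => wn_forward p hp A hw, fun hpow => wn_reverse p hp A hpow⟩
end
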